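/- Let E be a Banach space, U ⊆ E open, f, g : U → E be C¹ vector fields, and suppose f admits a C¹ local flow Φ : Ω → U (an open neighborhood Ω of {0} × U in ℝ × U with ∂Φ/∂t = f∘Φ, Φ(0,·) = id). Then for each p ∈ U, d/ds|_{s=0} [ DΦ(−s, Φ(s,p)) ( g(Φ(s,p)) ) ] = dg(p)(f(p)) − df(p)(g(p)), i.e. the derivative at 0 of the pullback of g along the flow of f equals the Lie bracket [f,g](p). -/

import Mathlib

open Topology Filter


/-- For `C¹` vector fields `f, g : U → E` on an open subset of a Banach
space, with `Φ` a local flow of `f` (defined on an open `Ω ⊇ {0} × U`) and `DΦ t x` the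
derivative of `Φ t` at `x`, for each `p ∈ U` the map
`s ↦ DΦ(−s, Φ(s,p)) (g (Φ(s,p)))` has derivative at `s = 0` equal to the Lie bracket
`[f,g](p) = dg(p)(f(p)) − df(p)(g(p))`. -/
theorem stmt7
    {E : Type*} [NormedAddCommGroup E] [NormedSpace ℝ E] [CompleteSpace E]
    (U : Set E) (hU : IsOpen U)
    (f g : E → E) (hf : ContDiffOn ℝ 2 f U) (hg : ContDiffOn ℝ 1 g U)
    (Ω : Set (ℝ × E)) (hΩ : IsOpen Ω) (hΩ0 : ∀ x ∈ U, ((0:ℝ), x) ∈ Ω)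
    (Φ : ℝ → E → E)
    (hmem : ∀ p ∈ Ω, Φ p.1 p.2 ∈ U)
    (hΦ0 : ∀ x ∈ U, Φ 0 x = x)
    (hflow : ∀ p ∈ Ω, HasDerivAt (fun s => Φ s p.2) (f (Φ p.1 p.2)) p.1)
    (hΦC2 : ContDiffOn ℝ 2 (fun p : ℝ × E => Φ p.1 p.2) Ω)
    (DΦ : ℝ → E → (E →L[ℝ] E))
    (hDΦ : ∀ p ∈ Ω, HasFDerivAt (Φ p.1) (DΦ p.1 p.2) p.2)
    (hgroup : ∀ s t x, (t, x) ∈ Ω → (s + t, x) ∈ Ω → (s, Φ t x) ∈ Ω →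
      Φ (s + t) x = Φ s (Φ t x)) :
    ∀ p ∈ U, HasDerivAt (fun s => DΦ (-s) (Φ s p) (g (Φ s p)))
      (fderiv ℝ g p (f p) - fderiv ℝ f p (g p)) 0 := by
  intro p hp
  have hpΩ : ((0:ℝ), p) ∈ Ω := hΩ0 p hp
  have hΦ0p : Φ 0 p = p := hΦ0 p hp
  set F : ℝ × E → E := fun q => Φ q.1 q.2 with hFdef
  set G : ℝ × E → ((ℝ × E) →L[ℝ] E) := fun q => fderiv ℝ F q with hGdef
  have hG1 : ContDiffOn ℝ 1 G Ω := hΦC2.fderiv_of_isOpen hΩ (by norm_num)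
  -- differentiability of F on Ω
  have hFd : ∀ q ∈ Ω, DifferentiableAt ℝ F q := fun q hq =>
    (hΦC2.contDiffAt (hΩ.mem_nhds hq)).differentiableAt two_ne_zero
  have hGd : DifferentiableAt ℝ G (0, p) :=
    (hG1.contDiffAt (hΩ.mem_nhds hpΩ)).differentiableAt one_ne_zero
  set B := fderiv ℝ G ((0:ℝ), p) with hBdef
  have hB : HasFDerivAt G B ((0:ℝ), p) := hGd.hasFDerivAt
  -- symmetry of the second derivative
  have hsymm : ∀ v w, B v w = B w v := by
    intro v w
    apply second_derivative_symmetric_of_eventually (f := F) _ hB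
    filter_upwards [hΩ.mem_nhds hpΩ] with q hq
    exact (hFd q hq).hasFDerivAt
  -- DΦ is the restriction of G to the space directions
  have hkey : ∀ q ∈ Ω, DΦ q.1 q.2 = (G q).comp (ContinuousLinearMap.inr ℝ ℝ E) := by
    intro q hq
    have h1 : HasFDerivAt (Φ q.1) ((G q).comp (ContinuousLinearMap.inr ℝ ℝ E)) q.2 :=
      by have h := (hFd q hq).hasFDerivAt.comp q.2 (hasFDerivAt_prodMk_right (𝕜 := ℝ) q.1 q.2); exact h
    exact (hDΦ q hq).unique h1
  -- DΦ 0 x = id on U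
  have hid : ∀ x ∈ U, DΦ 0 x = ContinuousLinearMap.id ℝ E := by
    intro x hx
    have h1 : HasFDerivAt (Φ 0) (ContinuousLinearMap.id ℝ E) x := by
      apply (hasFDerivAt_id x).congr_of_eventuallyEq
      filter_upwards [hU.mem_nhds hx] with y hy
      exact hΦ0 y hy
    exact (hDΦ (0, x) (hΩ0 x hx)).unique h1
  have hG0 : ∀ x ∈ U, ∀ w : E, G ((0:ℝ), x) ((0:ℝ), w) = w := by
    intro x hx w
    have h := (hkey ((0:ℝ), x) (hΩ0 x hx)).symm.trans (hid x hx)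
    have := ContinuousLinearMap.ext_iff.1 h w
    simpa using this
  -- the time derivative of Φ is f ∘ Φ
  have hGf : ∀ q ∈ Ω, G q ((1:ℝ), (0:E)) = f (F q) := by
    intro q hq
    have h1 : HasDerivAt (fun s => F (s, q.2)) (G q ((1:ℝ), (0:E))) q.1 := by
      have hh : HasDerivAt (fun s : ℝ => (s, q.2)) ((1:ℝ), (0:E)) q.1 :=
        (hasDerivAt_id q.1).prodMk (hasDerivAt_const q.1 q.2)
      exact (hFd q hq).hasFDerivAt.comp_hasDerivAt q.1 hh
    exact ((hflow q hq).unique h1).symm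
  have hfd : DifferentiableAt ℝ f p :=
    (hf.contDiffAt (hU.mem_nhds hp)).differentiableAt two_ne_zero
  have hgd : DifferentiableAt ℝ g p :=
    (hg.contDiffAt (hU.mem_nhds hp)).differentiableAt one_ne_zero
  -- mixed partial: B (0,w) (1,0) = Df(p) w
  have hB10 : ∀ w : E, B ((0:ℝ), w) ((1:ℝ), (0:E)) = fderiv ℝ f p w := by
    intro w
    have h1 : HasFDerivAt (fun q => G q ((1:ℝ), (0:E)))
        ((G ((0:ℝ), p)).comp (0 : (ℝ × E) →L[ℝ] (ℝ × E))
          + B.flip ((1:ℝ), (0:E))) ((0:ℝ), p) :=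
      hB.clm_apply (hasFDerivAt_const ((1:ℝ), (0:E)) ((0:ℝ), p))
    have h2 : HasFDerivAt (fun q => f (F q))
        ((fderiv ℝ f p).comp (G ((0:ℝ), p))) ((0:ℝ), p) := by
      have hfd' : HasFDerivAt f (fderiv ℝ f p) (F ((0:ℝ), p)) := by
        rw [show F ((0:ℝ), p) = p from hΦ0p]; exact hfd.hasFDerivAt
      exact hfd'.comp ((0:ℝ), p) (hFd ((0:ℝ), p) hpΩ).hasFDerivAt
    have h3 : HasFDerivAt (fun q => G q ((1:ℝ), (0:E)))
        ((fderiv ℝ f p).comp (G ((0:ℝ), p))) ((0:ℝ), p) := by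
      apply h2.congr_of_eventuallyEq
      filter_upwards [hΩ.mem_nhds hpΩ] with q hq
      exact hGf q hq
    have h4 := h1.unique h3
    have h5 := ContinuousLinearMap.ext_iff.1 h4 ((0:ℝ), w)
    simp only [ContinuousLinearMap.add_apply, ContinuousLinearMap.comp_apply,
      ContinuousLinearMap.flip_apply, ContinuousLinearMap.zero_apply, map_zero,
      zero_add] at h5
    rw [h5, hG0 p hp w]
  -- space derivative of x ↦ G (0,x) (0, f p) vanishes
  have hB0f : ∀ w : E, B ((0:ℝ), w) ((0:ℝ), f p) = 0 := by
    intro w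
    have hc : HasFDerivAt (fun x : E => G ((0:ℝ), x))
        (B.comp (ContinuousLinearMap.inr ℝ ℝ E)) p :=
      hB.comp p (hasFDerivAt_prodMk_right (𝕜 := ℝ) (0:ℝ) p)
    have h1 : HasFDerivAt (fun x : E => G ((0:ℝ), x) ((0:ℝ), f p))
        ((G ((0:ℝ), p)).comp (0 : E →L[ℝ] (ℝ × E))
          + (B.comp (ContinuousLinearMap.inr ℝ ℝ E)).flip ((0:ℝ), f p)) p :=
      hc.clm_apply (hasFDerivAt_const ((0:ℝ), f p) p)
    have h2 : HasFDerivAt (fun x : E => G ((0:ℝ), x) ((0:ℝ), f p))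
        (0 : E →L[ℝ] E) p := by
      apply (hasFDerivAt_const (f p) p).congr_of_eventuallyEq
      filter_upwards [hU.mem_nhds hp] with x hx
      exact hG0 x hx (f p)
    have h4 := h1.unique h2
    have h5 := ContinuousLinearMap.ext_iff.1 h4 w
    simpa using h5
  -- hence B (-1, f p) (0, w) = - Df(p) w
  have hBmain : ∀ w : E, B ((-1:ℝ), f p) ((0:ℝ), w) = -(fderiv ℝ f p w) := by
    intro w
    rw [hsymm]
    have hv : ((-1:ℝ), f p) = -((1:ℝ), (0:E)) + ((0:ℝ), f p) := by
      simp [Prod.ext_iff]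
    rw [hv, map_add, map_neg, hB10, hB0f, add_zero]
  -- the curve s ↦ (-s, Φ s p)
  set σ : ℝ → ℝ × E := fun s => ((-s : ℝ), Φ s p) with hσdef
  have hσ0 : σ 0 = ((0:ℝ), p) := by simp [hσdef, hΦ0p]
  have hflow0 : HasDerivAt (fun s => Φ s p) (f p) 0 := by
    have := hflow ((0:ℝ), p) hpΩ
    simpa [hΦ0p] using this
  have hσ : HasDerivAt σ ((-1:ℝ), f p) 0 := (hasDerivAt_neg (0:ℝ)).prodMk hflow0
  have hGc : HasDerivAt (fun s => G (σ s)) (B ((-1:ℝ), f p)) 0 := by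
    have hB' : HasFDerivAt G B (σ 0) := by rw [hσ0]; exact hB
    exact hB'.comp_hasDerivAt 0 hσ
  have hcomp : HasDerivAt (fun s => (G (σ s)).comp (ContinuousLinearMap.inr ℝ ℝ E))
      ((B ((-1:ℝ), f p)).comp (ContinuousLinearMap.inr ℝ ℝ E)) 0 := by
    have := hGc.clm_comp (hasDerivAt_const 0 (ContinuousLinearMap.inr ℝ ℝ E))
    simpa using this
  -- eventual identification with the actual function
  have hσcont : ContinuousAt σ 0 := by
    apply ContinuousAt.prodMk
    · exact (continuous_neg.continuousAt)
    · have hFc : ContinuousAt F ((0:ℝ), p) :=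
        (hΦC2.contDiffAt (hΩ.mem_nhds hpΩ)).continuousAt
      have ht : Filter.Tendsto (fun s : ℝ => ((s, p) : ℝ × E)) (𝓝 0) (𝓝 ((0:ℝ), p)) :=
        (continuous_id.prodMk continuous_const).tendsto 0
      exact Filter.Tendsto.comp hFc ht
  have hev : ∀ᶠ s in 𝓝 (0:ℝ), σ s ∈ Ω := by
    have := hσcont.preimage_mem_nhds (by rw [hσ0]; exact hΩ.mem_nhds hpΩ)
    filter_upwards [this] with s hs using hs
  have heq : (fun s => DΦ (-s) (Φ s p)) =ᶠ[𝓝 (0:ℝ)]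
      (fun s => (G (σ s)).comp (ContinuousLinearMap.inr ℝ ℝ E)) := by
    filter_upwards [hev] with s hs
    exact hkey (σ s) hs
  have hcfin : HasDerivAt (fun s => DΦ (-s) (Φ s p))
      ((B ((-1:ℝ), f p)).comp (ContinuousLinearMap.inr ℝ ℝ E)) 0 :=
    hcomp.congr_of_eventuallyEq heq
  have hBop : (B ((-1:ℝ), f p)).comp (ContinuousLinearMap.inr ℝ ℝ E)
      = -(fderiv ℝ f p) := by
    ext w
    simp [hBmain w]
  rw [hBop] at hcfin
  -- derivative of the value part
  have hv : HasDerivAt (fun s => g (Φ s p)) (fderiv ℝ g p (f p)) 0 := by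
    have hgd' : HasFDerivAt g (fderiv ℝ g p) (Φ 0 p) := by
      rw [hΦ0p]; exact hgd.hasFDerivAt
    exact hgd'.comp_hasDerivAt 0 hflow0
  have hfinal := hcfin.clm_apply hv
  have hc0 : DΦ (-(0:ℝ)) p = ContinuousLinearMap.id ℝ E := by
    rw [neg_zero]; exact hid p hp
  rw [hΦ0p] at hfinal
  rw [hc0] at hfinal
  simpa [sub_eq_neg_add] using hfinal
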